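/- Projected states stay close: for density matrices ρ, σ and a projector Π, Tr(Πρ) · ‖ (ΠρΠ)/Tr(Πρ) − (ΠσΠ)/Tr(Πσ) ‖₁ ≤ ‖ρ − σ‖₁ (whenever Tr(Πρ), Tr(Πσ) > 0). -/

import Mathlib

open Matrix
open scoped ComplexOrder

/-- The positive semidefinite square root of a positive semidefinite matrix
(the former `Matrix.PosSemidef.sqrt`, removed from Mathlib). -/
noncomputable def posSemidefSqrt {n : Type*} [Fintype n] [DecidableEq n] {A : Matrix n n ℂ}
    (hA : A.PosSemidef) : Matrix n n ℂ :=
  (hA.1.eigenvectorUnitary : Matrix n n ℂ) * diagonal ((↑) ∘ (√·) ∘ hA.1.eigenvalues) *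
    (star hA.1.eigenvectorUnitary : Matrix n n ℂ)

/-- Trace norm (Schatten 1-norm): `‖A‖₁ = Tr √(Aᴴ A)`. -/
noncomputable def traceNorm {n : Type*} [Fintype n] [DecidableEq n]
    (A : Matrix n n ℂ) : ℝ :=
  (posSemidefSqrt (Matrix.posSemidef_conjTranspose_mul_self A)).trace.re

section Helpers

variable {n : Type*} [Fintype n] [DecidableEq n]

open scoped MatrixOrder in
lemma psqrt_eq {A : Matrix n n ℂ} (hA : A.PosSemidef) : posSemidefSqrt hA = CFC.sqrt A := by
  rw [CFC.sqrt_eq_cfc, cfc_nnreal_eq_real _ A hA.nonneg, hA.1.cfc_eq]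
  simp only [IsHermitian.cfc, Unitary.conjStarAlgAut_apply, posSemidefSqrt]
  congr 3
  funext i
  simp [Real.coe_toNNReal', max_eq_left (hA.eigenvalues_nonneg i)]

open scoped MatrixOrder in
lemma psqrt_psd {A : Matrix n n ℂ} (hA : A.PosSemidef) : (posSemidefSqrt hA).PosSemidef := by
  rw [psqrt_eq]; exact (CFC.sqrt_nonneg A).posSemidef

open scoped MatrixOrder in
lemma psqrt_mul_self {A : Matrix n n ℂ} (hA : A.PosSemidef) :
    posSemidefSqrt hA * posSemidefSqrt hA = A := by
  rw [psqrt_eq]; exact CFC.sqrt_mul_sqrt_self A hA.nonneg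

open scoped MatrixOrder in
lemma psd_eq_sqrt_of_sq_eq {A : Matrix n n ℂ} (hA : A.PosSemidef) (B : Matrix n n ℂ)
    {hB : B.PosSemidef} (h : A ^ 2 = B) : A = posSemidefSqrt hB := by
  rw [psqrt_eq]; exact (CFC.sqrt_unique (by rw [← pow_two]; exact h) hA.nonneg).symm

lemma tn_psd {A : Matrix n n ℂ} (hA : A.PosSemidef) : traceNorm A = A.trace.re := by
  have h : A = posSemidefSqrt (Matrix.posSemidef_conjTranspose_mul_self A) :=
    psd_eq_sqrt_of_sq_eq hA _ (by rw [pow_two, hA.1.eq])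
  rw [traceNorm, ← h]

lemma psd_trace_nonneg {A : Matrix n n ℂ} (hA : A.PosSemidef) : 0 ≤ A.trace := by
  rw [Matrix.trace]
  refine Finset.sum_nonneg fun i _ => ?_
  exact hA.diag_nonneg

lemma psd_trace_real {A : Matrix n n ℂ} (hA : A.PosSemidef) :
    A.trace = ((A.trace.re : ℝ) : ℂ) := by
  have h := psd_trace_nonneg hA
  rw [Complex.nonneg_iff] at h
  exact Complex.ext rfl (by simp [h.2])

lemma psd_trace_mul_nonneg {A B : Matrix n n ℂ} (hA : A.PosSemidef) (hB : B.PosSemidef) :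
    0 ≤ (A * B).trace := by
  obtain ⟨S, hS1, hS2, hS3⟩ : ∃ S : Matrix n n ℂ, S.PosSemidef ∧ Sᴴ = S ∧ S * S = A :=
    ⟨posSemidefSqrt hA, psqrt_psd hA, (psqrt_psd hA).1.eq, psqrt_mul_self hA⟩
  have h2 : (A * B).trace = (S * B * S).trace := by
    rw [← hS3]; exact (trace_mul_cycle S B S).symm
  rw [h2]
  have := hB.mul_mul_conjTranspose_same S
  rw [hS2] at this
  exact psd_trace_nonneg this

lemma herm_decomp {H : Matrix n n ℂ} (hH : H.IsHermitian) :
    ∃ X Y : Matrix n n ℂ, X.PosSemidef ∧ Y.PosSemidef ∧ H = X - Y ∧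
      traceNorm H = X.trace.re + Y.trace.re ∧ X.trace - Y.trace = H.trace ∧
      ∃ Q Q' : Matrix n n ℂ, Q.PosSemidef ∧ (1 - Q).PosSemidef ∧ Q'.PosSemidef ∧
        (1 - Q').PosSemidef ∧ (Q * H).trace = X.trace ∧ (Q' * H).trace = - Y.trace := by
  set U : Matrix n n ℂ := (hH.eigenvectorUnitary : Matrix n n ℂ) with hUdef
  set μ : n → ℝ := hH.eigenvalues with hμdef
  have hU1 : U * star U = 1 := (Matrix.mem_unitaryGroup_iff).mp hH.eigenvectorUnitary.2
  have hU2 : star U * U = 1 := (Matrix.mem_unitaryGroup_iff').mp hH.eigenvectorUnitary.2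
  set C : (n → ℝ) → Matrix n n ℂ :=
    fun r => U * diagonal (fun i => ((r i : ℝ) : ℂ)) * star U with hCdef
  have key : ∀ r s : n → ℝ, C r * C s = C (r * s) := by
    intro r s
    have hd : diagonal (fun i => ((r i : ℝ) : ℂ)) * diagonal (fun i => ((s i : ℝ) : ℂ))
        = diagonal (fun i => (((r * s) i : ℝ) : ℂ)) := by
      rw [diagonal_mul_diagonal]
      congr 1
      funext i
      simp [Pi.mul_apply]
    simp only [hCdef]
    rw [mul_assoc (U * diagonal (fun i => ((r i : ℝ) : ℂ))) (star U),
      ← mul_assoc (star U) (U * diagonal (fun i => ((s i : ℝ) : ℂ))) (star U),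
      ← mul_assoc (star U) U, hU2, one_mul,
      ← mul_assoc, mul_assoc U, hd]
  have keytr : ∀ r : n → ℝ, (C r).trace = ((∑ i, r i : ℝ) : ℂ) := by
    intro r
    rw [hCdef]
    rw [trace_mul_cycle, hU2, one_mul, trace_diagonal]
    push_cast
    rfl
  have keypsd : ∀ r : n → ℝ, (∀ i, 0 ≤ r i) → (C r).PosSemidef := by
    intro r hr
    have : PosSemidef (diagonal (fun i => ((r i : ℝ) : ℂ))) :=
      posSemidef_diagonal_iff.mpr fun i => by
        simpa using Complex.zero_le_real.mpr (hr i) -- might need fix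
    simpa [hCdef, Matrix.star_eq_conjTranspose] using this.mul_mul_conjTranspose_same U
  have hsub : ∀ r s : n → ℝ, C r - C s = C (r - s) := by
    intro r s
    simp only [hCdef]
    rw [← sub_mul, ← mul_sub, diagonal_sub]
    congr 2
    funext i
    push_cast [Pi.sub_apply]
    ring
  have hHspec : H = C μ := by
    simp only [hCdef]
    exact hH.spectral_theorem
  have hone : C (fun _ => 1) = 1 := by
    simp only [hCdef, Complex.ofReal_one, diagonal_one, mul_one, hU1]
  -- the decomposition
  refine ⟨C (fun i => max (μ i) 0), C (fun i => max (-μ i) 0),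
    keypsd _ (fun i => le_max_right _ _), keypsd _ (fun i => le_max_right _ _), ?_, ?_, ?_, ?_⟩
  · rw [hsub]
    have : (fun i => max (μ i) 0) - (fun i => max (-μ i) 0) = μ :=
      funext fun i => max_zero_sub_eq_self _
    rw [this]
    exact hHspec
  · have habs : C (fun i => |μ i|) = posSemidefSqrt (Matrix.posSemidef_conjTranspose_mul_self H) := by
      refine psd_eq_sqrt_of_sq_eq (keypsd _ fun i => abs_nonneg _) _ ?_
      rw [pow_two, key, hH.eq, hHspec, key]
      have : (fun i => |μ i|) * (fun i => |μ i|) = μ * μ := by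
        funext i
        simp [Pi.mul_apply, abs_mul_abs_self]
      rw [this]
    rw [traceNorm, ← habs, keytr, keytr, keytr, Complex.ofReal_re, Complex.ofReal_re,
      Complex.ofReal_re, ← Finset.sum_add_distrib]
    exact Finset.sum_congr rfl fun i _ => (max_zero_add_max_neg_zero_eq_abs_self _).symm
  · rw [keytr, keytr, hHspec, keytr, ← Complex.ofReal_sub, ← Finset.sum_sub_distrib]
    exact congrArg Complex.ofReal (Finset.sum_congr rfl fun i _ => max_zero_sub_eq_self _)
  · refine ⟨C (fun i => if 0 < μ i then 1 else 0), C (fun i => if μ i < 0 then 1 else 0),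
      keypsd _ (fun i => by positivity), ?_, keypsd _ (fun i => by positivity), ?_, ?_, ?_⟩
    · rw [← hone, hsub]
      refine keypsd _ fun i => ?_
      simp only [Pi.sub_apply]
      split <;> norm_num
    · rw [← hone, hsub]
      refine keypsd _ fun i => ?_
      simp only [Pi.sub_apply]
      split <;> norm_num
    · rw [hHspec, key, keytr, keytr]
      congr 1
      refine Finset.sum_congr rfl fun i _ => ?_
      rw [Pi.mul_apply]
      rcases lt_or_ge 0 (μ i) with h | h
      · rw [if_pos h, one_mul, max_eq_left h.le]
      · rw [if_neg (not_lt.mpr h), zero_mul, max_eq_right h]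
    · rw [hHspec, key, keytr, keytr, ← Complex.ofReal_neg, ← Finset.sum_neg_distrib]
      refine congrArg Complex.ofReal (Finset.sum_congr rfl fun i _ => ?_)
      rw [Pi.mul_apply]
      rcases lt_or_ge (μ i) 0 with h | h
      · rw [if_pos h, one_mul, max_eq_left (by linarith), neg_neg]
      · rw [if_neg (not_lt.mpr h), zero_mul, max_eq_right (by linarith), neg_zero]

lemma tr_re_mul_nonneg {M N : Matrix n n ℂ} (hM : M.PosSemidef) (hN : N.PosSemidef) :
    0 ≤ (M * N).trace.re :=
  (Complex.nonneg_iff.mp (psd_trace_mul_nonneg hM hN)).1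

lemma tr_re_mul_le {Q X : Matrix n n ℂ} (hQ1 : (1 - Q).PosSemidef) (hX : X.PosSemidef) :
    (Q * X).trace.re ≤ X.trace.re := by
  have h0 : 0 ≤ ((1 - Q) * X).trace.re := tr_re_mul_nonneg hQ1 hX
  rw [sub_mul, one_mul, trace_sub, Complex.sub_re] at h0
  linarith

lemma tn_le_decomp {H X Y : Matrix n n ℂ} (hX : X.PosSemidef) (hY : Y.PosSemidef)
    (hd : H = X - Y) : traceNorm H ≤ X.trace.re + Y.trace.re := by
  have hH : H.IsHermitian := hd ▸ hX.1.sub hY.1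
  obtain ⟨A, B, hA, hB, hAB, htn, -, Q, Q', hQ, hQ1, hQ', hQ1', hQH, hQ'H⟩ := herm_decomp hH
  have h1 : A.trace.re ≤ X.trace.re := by
    have e : (Q * H).trace.re = (Q * X).trace.re - (Q * Y).trace.re := by
      rw [hd, mul_sub, trace_sub, Complex.sub_re]
    have l1 : 0 ≤ (Q * Y).trace.re := tr_re_mul_nonneg hQ hY
    have l2 : (Q * X).trace.re ≤ X.trace.re := tr_re_mul_le hQ1 hX
    have := congrArg Complex.re hQH
    rw [e] at this
    linarith
  have h2 : B.trace.re ≤ Y.trace.re := by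
    have e : (Q' * H).trace.re = (Q' * X).trace.re - (Q' * Y).trace.re := by
      rw [hd, mul_sub, trace_sub, Complex.sub_re]
    have l1 : 0 ≤ (Q' * X).trace.re := tr_re_mul_nonneg hQ' hX
    have l2 : (Q' * Y).trace.re ≤ Y.trace.re := tr_re_mul_le hQ1' hY
    have := congrArg Complex.re hQ'H
    rw [e, Complex.neg_re] at this
    linarith
  rw [htn]
  linarith

lemma psd_rsmul {A : Matrix n n ℂ} (hA : A.PosSemidef) {c : ℝ} (hc : 0 ≤ c) :
    (((c : ℝ) : ℂ) • A).PosSemidef := by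
  refine ⟨?_, fun x => ?_⟩
  · rw [IsHermitian, conjTranspose_smul, hA.1.eq]
    congr 1
    exact Complex.conj_ofReal c
  · exact (hA.smul (Complex.zero_le_real.mpr hc)).2 x

end Helpers

set_option maxHeartbeats 1000000 in
/-- Projected (renormalized) states stay close:
`Tr(Pρ) ‖PρP/Tr(Pρ) − PσP/Tr(Pσ)‖₁ ≤ ‖ρ − σ‖₁` for a projector `P` and
density matrices `ρ, σ` with positive projection probabilities. -/
theorem projected_states_close {n : Type*} [Fintype n] [DecidableEq n]
    (ρ σ P : Matrix n n ℂ)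
    (hρ : ρ.PosSemidef) (hρtr : ρ.trace = 1)
    (hσ : σ.PosSemidef) (hσtr : σ.trace = 1)
    (hPherm : Pᴴ = P) (hPidem : P * P = P)
    (p q : ℝ) (hp : 0 < p) (hq : 0 < q)
    (hptr : (P * ρ).trace = (p : ℂ)) (hqtr : (P * σ).trace = (q : ℂ)) :
    p * traceNorm (((p : ℂ))⁻¹ • (P * ρ * P) - ((q : ℂ))⁻¹ • (P * σ * P))
      ≤ traceNorm (ρ - σ) := by
  -- P and 1 - P are PSD
  have hP : P.PosSemidef := by
    have h : P = Pᴴ * P := by rw [hPherm, hPidem]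
    exact h ▸ posSemidef_conjTranspose_mul_self P
  have hP1 : (1 - P).PosSemidef := by
    have h : 1 - P = (1 - P)ᴴ * (1 - P) := by
      rw [conjTranspose_sub, conjTranspose_one, hPherm, mul_sub, sub_mul, sub_mul, hPidem]
      noncomm_ring
    exact h ▸ posSemidef_conjTranspose_mul_self (1 - P)
  -- Jordan decomposition of ρ - σ
  obtain ⟨X, Y, hX, hY, hXY, htn, htr, -⟩ := herm_decomp (hρ.1.sub hσ.1)
  have hPXP : (P * X * P).PosSemidef := by
    simpa [hPherm] using hX.mul_mul_conjTranspose_same P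
  have hPYP : (P * Y * P).PosSemidef := by
    simpa [hPherm] using hY.mul_mul_conjTranspose_same P
  have hPsP : (P * σ * P).PosSemidef := by
    simpa [hPherm] using hσ.mul_mul_conjTranspose_same P
  set a : ℝ := X.trace.re with hadef
  set b : ℝ := Y.trace.re with hbdef
  set x : ℝ := (P * X).trace.re with hxdef
  set y : ℝ := (P * Y).trace.re with hydef
  have hab : a = b := by
    have h0 : X.trace - Y.trace = 0 := by rw [htr, trace_sub, hρtr, hσtr, sub_self]
    have := congrArg Complex.re h0
    rw [Complex.sub_re, Complex.zero_re] at this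
    linarith
  have hxa : x ≤ a := tr_re_mul_le hP1 hX
  have hyb : y ≤ b := tr_re_mul_le hP1 hY
  have hx0 : 0 ≤ x := tr_re_mul_nonneg hP hX
  have hy0 : 0 ≤ y := tr_re_mul_nonneg hP hY
  -- q - p = y - x
  have hqp : q - p = y - x := by
    have h' : σ - ρ = Y - X := by rw [← neg_sub ρ σ, hXY, neg_sub]
    have e1 : ((q : ℂ)) - p = (P * Y).trace - (P * X).trace := by
      rw [← hqtr, ← hptr, ← trace_sub, ← trace_sub, ← mul_sub, ← mul_sub, h']
    have := congrArg Complex.re e1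
    simpa [Complex.sub_re, Complex.ofReal_re] using this
  -- the decomposition of the renormalized difference
  set c : ℝ := 1 - p / q with hcdef
  set m : ℝ := max c 0 with hmdef
  set m' : ℝ := max (-c) 0 with hm'def
  have hm0 : 0 ≤ m := le_max_right _ _
  have hm'0 : 0 ≤ m' := le_max_right _ _
  have hmm' : m - m' = c := max_zero_sub_eq_self c
  set XX : Matrix n n ℂ := ((p⁻¹ : ℝ) : ℂ) • (P * X * P + ((m : ℝ) : ℂ) • (P * σ * P))
    with hXXdef
  set YY : Matrix n n ℂ := ((p⁻¹ : ℝ) : ℂ) • (P * Y * P + ((m' : ℝ) : ℂ) • (P * σ * P))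
    with hYYdef
  have hXXpsd : XX.PosSemidef := psd_rsmul (hPXP.add (psd_rsmul hPsP hm0)) (by positivity)
  have hYYpsd : YY.PosSemidef := psd_rsmul (hPYP.add (psd_rsmul hPsP hm'0)) (by positivity)
  have hPP : P * X * P = P * ρ * P - P * σ * P + P * Y * P := by
    have h1 : P * (X - Y) * P = P * (ρ - σ) * P := by rw [← hXY]
    simp only [mul_sub, sub_mul] at h1
    exact sub_eq_iff_eq_add.mp h1
  have hmval : ((m : ℝ) : ℂ) = 1 - (p : ℂ) / (q : ℂ) + ((m' : ℝ) : ℂ) := by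
    have : m = c + m' := by linarith
    rw [this, hcdef]
    push_cast
    ring
  have hD : ((p : ℂ))⁻¹ • (P * ρ * P) - ((q : ℂ))⁻¹ • (P * σ * P) = XX - YY := by
    rw [hXXdef, hYYdef, hPP, hmval]
    have hpc : ((p⁻¹ : ℝ) : ℂ) = ((p : ℝ) : ℂ)⁻¹ := by push_cast; ring
    rw [hpc]
    match_scalars
    all_goals field_simp
    all_goals ring
  -- conclude
  have hbound := tn_le_decomp hXXpsd hYYpsd hD
  -- trace computations
  have hPsq : (P * σ * P).trace = ((q : ℝ) : ℂ) := by
    rw [trace_mul_cycle, hPidem, hqtr]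
  have hPXtr : (P * X * P).trace = (P * X).trace := by
    rw [trace_mul_cycle, hPidem]
  have hPYtr : (P * Y * P).trace = (P * Y).trace := by
    rw [trace_mul_cycle, hPidem]
  have hXXtr : XX.trace.re = p⁻¹ * (x + m * q) := by
    rw [hXXdef, trace_smul, smul_eq_mul, Complex.re_ofReal_mul, trace_add, trace_smul,
      smul_eq_mul, hPXtr, hPsq, Complex.add_re, ← Complex.ofReal_mul, Complex.ofReal_re]
  have hYYtr : YY.trace.re = p⁻¹ * (y + m' * q) := by
    rw [hYYdef, trace_smul, smul_eq_mul, Complex.re_ofReal_mul, trace_add, trace_smul,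
      smul_eq_mul, hPYtr, hPsq, Complex.add_re, ← Complex.ofReal_mul, Complex.ofReal_re]
  have habs : (m + m') * q = |y - x| := by
    have h1 : m + m' = |c| := max_zero_add_max_neg_zero_eq_abs_self c
    have h2 : c = (q - p) / q := by rw [hcdef]; field_simp
    rw [h1, h2, abs_div, abs_of_pos hq, div_mul_cancel₀ _ (ne_of_gt hq), hqp]
  have hfin : x + y + (m + m') * q ≤ a + b := by
    rw [habs]
    rcases abs_cases (y - x) with ⟨h, -⟩ | ⟨h, -⟩ <;> linarith
  clear_value a b x y c m m' XX YY
  have step1 : p * traceNorm (((p : ℂ))⁻¹ • (P * ρ * P) - ((q : ℂ))⁻¹ • (P * σ * P))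
      ≤ p * (XX.trace.re + YY.trace.re) := mul_le_mul_of_nonneg_left hbound hp.le
  have step2 : p * (XX.trace.re + YY.trace.re) = x + y + (m + m') * q := by
    rw [hXXtr, hYYtr, ← mul_add, ← mul_assoc, mul_inv_cancel₀ (ne_of_gt hp), one_mul]
    ring
  linarith
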